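/- Under the noisy-data setup (true system in difference-operator form with l at least its lag, data consistent with some noise V* ∈ 𝒱, Q ≺ 0, and the matrix [[Q̄, S̄],[S̄ᵀ, R̄]] invertible): if there exist a symmetric positive semidefinite P ∈ ℝ^{2ml×2ml} and μ ≥ 0 such that Gᵀ·diag(−P, P, −γ²I_m, I_m)·G − μ·[[Q̃, S̃],[S̃ᵀ, R̃]] ⪯ 0, then lim_{τ→∞} Γ(T^τ) ≤ γ, where T^τ are the truncated input-output operators of the true noise-free system. -/

import Mathlib

open scoped ENNReal
open Filter Matrix Topology

noncomputable section

abbrev Evec (m : ℕ) := EuclideanSpace ℂ (Fin m)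

/-- Action of a real matrix on a complex Euclidean vector. -/
noncomputable def act {a b : ℕ} (M : Matrix (Fin a) (Fin b) ℝ) (v : Evec b) : Evec a :=
  Matrix.toEuclideanLin (M.map Complex.ofReal) v

/-- Output of the discrete-time system with zero initial state. -/
noncomputable def output {n m : ℕ} (A : Matrix (Fin n) (Fin n) ℝ) (B : Matrix (Fin n) (Fin m) ℝ)
    (C : Matrix (Fin m) (Fin n) ℝ) (D : Matrix (Fin m) (Fin m) ℝ)
    (u : ℕ → Evec m) (k : ℕ) : Evec m :=
  act D (u k) + ∑ i ∈ Finset.range k, act (C * A ^ (k - 1 - i) * B) (u i)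

/-- ℓ₂ norm of a sequence, valued in [0,∞]. -/
noncomputable def enorm2 {m : ℕ} (f : ℕ → Evec m) : ℝ≥0∞ :=
  (∑' k, (‖f k‖₊ : ℝ≥0∞) ^ 2) ^ (1/2 : ℝ)

noncomputable def norm2 {m : ℕ} (f : ℕ → Evec m) : ℝ := (enorm2 f).toReal

noncomputable def inner2 {m : ℕ} (f g : ℕ → Evec m) : ℂ := ∑' k, (inner ℂ (f k) (g k) : ℂ)

noncomputable def sangle {m : ℕ} (u y : ℕ → Evec m) : ℝ :=
  open scoped Classical in
  if y = 0 then 0 else Real.arccos ((inner2 y u).re / (norm2 y * norm2 u))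

noncomputable def srg {m : ℕ} (dom : Set (ℕ → Evec m))
    (T : (ℕ → Evec m) → (ℕ → Evec m)) : Set ℂ :=
  {w | ∃ u ∈ dom, u ≠ 0 ∧
    (w = ((norm2 (T u) / norm2 u : ℝ) : ℂ) * Complex.exp ((sangle u (T u) : ℂ) * Complex.I) ∨
     w = ((norm2 (T u) / norm2 u : ℝ) : ℂ) * Complex.exp (-(sangle u (T u) : ℂ) * Complex.I))}

noncomputable def maxGain {m : ℕ} (dom : Set (ℕ → Evec m))
    (T : (ℕ → Evec m) → (ℕ → Evec m)) : ℝ≥0∞ :=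
  ⨆ u ∈ {v ∈ dom | v ≠ 0}, enorm2 (T u) / enorm2 u

noncomputable def minGain {m : ℕ} (dom : Set (ℕ → Evec m))
    (T : (ℕ → Evec m) → (ℕ → Evec m)) : ℝ≥0∞ :=
  ⨅ u ∈ {v ∈ dom | v ≠ 0}, enorm2 (T u) / enorm2 u

/-- The subspace ℓ_{2,τ}: sequences vanishing strictly after time τ. -/
def ltwoTau (m τ : ℕ) : Set (ℕ → Evec m) := {u | ∀ k, τ < k → u k = 0}

/-- The truncated operator T^τ. -/
noncomputable def TtauMap {n m : ℕ} (A : Matrix (Fin n) (Fin n) ℝ) (B : Matrix (Fin n) (Fin m) ℝ)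
    (C : Matrix (Fin m) (Fin n) ℝ) (D : Matrix (Fin m) (Fin m) ℝ) (τ : ℕ)
    (u : ℕ → Evec m) (k : ℕ) : Evec m :=
  if k ≤ τ then output A B C D u k else 0

/-- Domain of the ℓ₂ operator T. -/
def domInf {n m : ℕ} (A : Matrix (Fin n) (Fin n) ℝ) (B : Matrix (Fin n) (Fin m) ℝ)
    (C : Matrix (Fin m) (Fin n) ℝ) (D : Matrix (Fin m) (Fin m) ℝ) : Set (ℕ → Evec m) :=
  {u | enorm2 u ≠ ⊤ ∧ enorm2 (output A B C D u) ≠ ⊤}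

/-- Limit of a sequence of subsets of a topological space. -/
def setLimit {X : Type*} [TopologicalSpace X] (S : ℕ → Set X) : Set X :=
  {x | ∃ z : ℕ → X, (∀ τ, z τ ∈ S τ) ∧ Tendsto z atTop (𝓝 x)}

/-- The (possibly unbounded) annulus centred at α with radii lo ≤ hi, as a subset of Ĉ. -/
def annulus (α : ℝ) (lo hi : ℝ≥0∞) : Set (OnePoint ℂ) :=
  {w | (w = OnePoint.infty ∧ hi = ⊤) ∨
    ∃ z : ℂ, w = (((α : ℂ) + z : ℂ) : OnePoint ℂ) ∧ lo ≤ (‖z‖₊ : ℝ≥0∞) ∧ (‖z‖₊ : ℝ≥0∞) ≤ hi}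




/-- A real matrix is negative semidefinite: symmetric and xᵀMx ≤ 0 for all x. -/
def IsNegSemidef {k : Type*} [Fintype k] (M : Matrix k k ℝ) : Prop :=
  M.IsSymm ∧ ∀ x : k → ℝ, x ⬝ᵥ M.mulVec x ≤ 0

/-- A real matrix is positive semidefinite: symmetric and xᵀMx ≥ 0 for all x. -/
def IsPosSemidefR {k : Type*} [Fintype k] (M : Matrix k k ℝ) : Prop :=
  M.IsSymm ∧ ∀ x : k → ℝ, 0 ≤ x ⬝ᵥ M.mulVec x

/-- A real matrix is negative definite. -/
def IsNegDef {k : Type*} [Fintype k] (M : Matrix k k ℝ) : Prop :=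
  M.IsSymm ∧ ∀ x : k → ℝ, x ≠ 0 → x ⬝ᵥ M.mulVec x < 0

/-- (A,B) is controllable: the controllability matrix has full rank n. -/
def Controllable {n m : ℕ} (A : Matrix (Fin n) (Fin n) ℝ) (B : Matrix (Fin n) (Fin m) ℝ) : Prop :=
  (Matrix.of fun i (p : Fin n × Fin m) => (A ^ (p.1 : ℕ) * B) i p.2).rank = n

/-- The observability matrix of depth l (rows C, CA, …, CA^{l-1}). -/
def obsMat {n m : ℕ} (A : Matrix (Fin n) (Fin n) ℝ) (C : Matrix (Fin m) (Fin n) ℝ) (l : ℕ) :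
    Matrix (Fin l × Fin m) (Fin n) ℝ :=
  Matrix.of fun p j => (C * A ^ (p.1 : ℕ)) p.2 j

/-- (A,C) is observable: the depth-n observability matrix has full rank n. -/
def Observable {n m : ℕ} (A : Matrix (Fin n) (Fin n) ℝ) (C : Matrix (Fin m) (Fin n) ℝ) : Prop :=
  (obsMat A C n).rank = n

/-- The lag of the system: smallest l ≥ 1 with full-rank observability matrix of depth l. -/
noncomputable def lag {n m : ℕ} (A : Matrix (Fin n) (Fin n) ℝ) (C : Matrix (Fin m) (Fin n) ℝ) : ℕ :=
  sInf {l | 1 ≤ l ∧ (obsMat A C l).rank = n}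

/-- The LMI matrix for the maximum gain. -/
def lmiMax {n m : ℕ} (A : Matrix (Fin n) (Fin n) ℝ) (B : Matrix (Fin n) (Fin m) ℝ)
    (C : Matrix (Fin m) (Fin n) ℝ) (D : Matrix (Fin m) (Fin m) ℝ)
    (P : Matrix (Fin n) (Fin n) ℝ) (γ : ℝ) : Matrix (Fin n ⊕ Fin m) (Fin n ⊕ Fin m) ℝ :=
  Matrix.fromBlocks (Aᵀ * P * A - P + Cᵀ * C) (Aᵀ * P * B + Cᵀ * D)
    (Bᵀ * P * A + Dᵀ * C) (Bᵀ * P * B + Dᵀ * D - γ ^ 2 • (1 : Matrix (Fin m) (Fin m) ℝ))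

/-- The LMI matrix for the minimum gain. -/
def lmiMin {n m : ℕ} (A : Matrix (Fin n) (Fin n) ℝ) (B : Matrix (Fin n) (Fin m) ℝ)
    (C : Matrix (Fin m) (Fin n) ℝ) (D : Matrix (Fin m) (Fin m) ℝ)
    (P : Matrix (Fin n) (Fin n) ℝ) (ζ : ℝ) : Matrix (Fin n ⊕ Fin m) (Fin n ⊕ Fin m) ℝ :=
  Matrix.fromBlocks (Aᵀ * P * A - P - Cᵀ * C) (Aᵀ * P * B - Cᵀ * D)
    (Bᵀ * P * A - Dᵀ * C) (Bᵀ * P * B - Dᵀ * D + ζ ^ 2 • (1 : Matrix (Fin m) (Fin m) ℝ))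

/-- Persistency of excitation of order L of the input data (u_k)_{k=0}^{N-1}. -/
def PersistentlyExciting (m N L : ℕ) (u : ℕ → Fin m → ℝ) : Prop :=
  (Matrix.of fun (p : Fin L × Fin m) (j : Fin (N - L + 1)) => u ((p.1 : ℕ) + (j : ℕ)) p.2).rank
    = m * L

/-- (u,y) is an input-output trajectory of (A,B,C,D) of length N. -/
def IsTrajectory {n m : ℕ} (A : Matrix (Fin n) (Fin n) ℝ) (B : Matrix (Fin n) (Fin m) ℝ)
    (C : Matrix (Fin m) (Fin n) ℝ) (D : Matrix (Fin m) (Fin m) ℝ) (N : ℕ)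
    (u y : ℕ → Fin m → ℝ) : Prop :=
  ∃ x : ℕ → Fin n → ℝ, ∀ k < N,
    x (k + 1) = A.mulVec (x k) + B.mulVec (u k) ∧ y k = C.mulVec (x k) + D.mulVec (u k)

/-- Index type for the extended state ξ (u-block followed by y-block). -/
abbrev rindex (l m : ℕ) := (Fin l × Fin m) ⊕ (Fin l × Fin m)

/-- The extended state ξ_k = (u_{k-l}, …, u_{k-1}, y_{k-l}, …, y_{k-1}). -/
def xi {m : ℕ} (l : ℕ) (u y : ℕ → Fin m → ℝ) (k : ℕ) : rindex l m → ℝ :=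
  Sum.elim (fun p => u (k - l + (p.1 : ℕ)) p.2) (fun p => y (k - l + (p.1 : ℕ)) p.2)

def XiMat {m : ℕ} (l N : ℕ) (u y : ℕ → Fin m → ℝ) : Matrix (rindex l m) (Fin (N - l)) ℝ :=
  Matrix.of fun r j => xi l u y (l + (j : ℕ)) r

def XiPlus {m : ℕ} (l N : ℕ) (u y : ℕ → Fin m → ℝ) : Matrix (rindex l m) (Fin (N - l)) ℝ :=
  Matrix.of fun r j => xi l u y (l + 1 + (j : ℕ)) r

def UXi (m l N : ℕ) (u : ℕ → Fin m → ℝ) : Matrix (Fin m) (Fin (N - l)) ℝ :=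
  Matrix.of fun a j => u (l + (j : ℕ)) a

/-- Membership of a noise matrix V in the noise set 𝒱. -/
def inNoiseSet {r mv : ℕ} (Q : Matrix (Fin r) (Fin r) ℝ) (S : Matrix (Fin r) (Fin mv) ℝ)
    (R : Matrix (Fin mv) (Fin mv) ℝ) (V : Matrix (Fin mv) (Fin r) ℝ) : Prop :=
  IsPosSemidefR ((Matrix.fromRows Vᵀ (1 : Matrix (Fin mv) (Fin mv) ℝ))ᵀ
    * Matrix.fromBlocks Q S Sᵀ R * Matrix.fromRows Vᵀ (1 : Matrix (Fin mv) (Fin mv) ℝ))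

/-- The data matrix M = [[(Ξ; U_Ξ), 0], [Y_Ξ, I]]. -/
def Mdata {m : ℕ} (l N : ℕ) (u y : ℕ → Fin m → ℝ) :
    Matrix ((rindex l m ⊕ Fin m) ⊕ Fin m) (Fin (N - l) ⊕ Fin m) ℝ :=
  Matrix.fromBlocks (Matrix.fromRows (XiMat l N u y) (UXi m l N u)) 0 (UXi m l N y) 1

/-- The noise-weight matrix W = [[Q, S Bᵥᵀ], [Bᵥ Sᵀ, Bᵥ R Bᵥᵀ]]. -/
def Wmat {r m mv : ℕ} (Q : Matrix (Fin r) (Fin r) ℝ) (S : Matrix (Fin r) (Fin mv) ℝ)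
    (R : Matrix (Fin mv) (Fin mv) ℝ) (Bv : Matrix (Fin m) (Fin mv) ℝ) :
    Matrix (Fin r ⊕ Fin m) (Fin r ⊕ Fin m) ℝ :=
  Matrix.fromBlocks Q (S * Bvᵀ) (Bv * Sᵀ) (Bv * R * Bvᵀ)

/-- The matrix [[Q̄, S̄], [S̄ᵀ, R̄]] = M W Mᵀ. -/
def QSRbar {m mv : ℕ} (l N : ℕ) (u y : ℕ → Fin m → ℝ)
    (Q : Matrix (Fin (N - l)) (Fin (N - l)) ℝ) (S : Matrix (Fin (N - l)) (Fin mv) ℝ)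
    (R : Matrix (Fin mv) (Fin mv) ℝ) (Bv : Matrix (Fin m) (Fin mv) ℝ) :
    Matrix ((rindex l m ⊕ Fin m) ⊕ Fin m) ((rindex l m ⊕ Fin m) ⊕ Fin m) ℝ :=
  Mdata l N u y * Wmat Q S R Bv * (Mdata l N u y)ᵀ

/-- The second block row ((Ã; 0), (B̃; 0), (0; I)) of the matrix G, where Ã, B̃ are the
block-shift matrices of the difference-operator representation: it maps (ξ, u, w) to the
vector ξ₊ whose u-block and y-block are shifted, with u in the slot for `u_k` and w in the
slot for `y_k`. -/
def Kshift (l m : ℕ) : Matrix (rindex l m) ((rindex l m ⊕ Fin m) ⊕ Fin m) ℝ :=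
  Matrix.of fun r c =>
    match r, c with
    | .inl (i, a), .inl (.inl (.inl (i', a'))) =>
        if (i : ℕ) + 1 = (i' : ℕ) ∧ a = a' then 1 else 0
    | .inl (i, a), .inl (.inr a') => if (i : ℕ) + 1 = l ∧ a = a' then 1 else 0
    | .inr (i, a), .inl (.inl (.inr (i', a'))) =>
        if (i : ℕ) + 1 = (i' : ℕ) ∧ a = a' then 1 else 0
    | .inr (i, a), .inr a' => if (i : ℕ) + 1 = l ∧ a = a' then 1 else 0
    | _, _ => 0

/-- The matrix G with block rows (I,0,0), ((Ã;0),(B̃;0),(0;I)), (0,I,0), (0,0,I). -/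
def Gmat (l m : ℕ) :
    Matrix ((rindex l m ⊕ rindex l m) ⊕ (Fin m ⊕ Fin m)) ((rindex l m ⊕ Fin m) ⊕ Fin m) ℝ :=
  Matrix.fromRows
    (Matrix.fromRows
      (Matrix.fromCols (Matrix.fromCols 1 0) 0)
      (Kshift l m))
    (Matrix.fromRows
      (Matrix.fromCols (Matrix.fromCols 0 1) 0)
      (Matrix.fromCols (Matrix.fromCols 0 0) 1))

/-- The block-diagonal multiplier diag(−P, P, Λ, Ψ). -/
def PhiMat {l m : ℕ} (P : Matrix (rindex l m) (rindex l m) ℝ) (Λ Ψ : Matrix (Fin m) (Fin m) ℝ) :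
    Matrix ((rindex l m ⊕ rindex l m) ⊕ (Fin m ⊕ Fin m))
      ((rindex l m ⊕ rindex l m) ⊕ (Fin m ⊕ Fin m)) ℝ :=
  Matrix.fromBlocks (Matrix.fromBlocks (-P) 0 0 P) 0 0 (Matrix.fromBlocks Λ 0 0 Ψ)

section Aux15

open Finset

lemma act_apply {a b : ℕ} (M : Matrix (Fin a) (Fin b) ℝ) (v : Evec b) (i : Fin a) :
    act M v i = ∑ j, (M i j : ℂ) * v j := by
  simp [act, Matrix.toEuclideanLin_apply, Matrix.mulVec, dotProduct, WithLp.equiv]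

lemma act_zero {a b : ℕ} (M : Matrix (Fin a) (Fin b) ℝ) : act M (0 : Evec b) = 0 := by
  simp [act]

/-- indicator sum helper -/
lemma sum_ind_fin {l m : ℕ} (c : ℕ) (a : Fin m) (f : Fin l → Fin m → ℝ) :
    (∑ i' : Fin l, ∑ a' : Fin m, (if c = (i' : ℕ) ∧ a = a' then (1:ℝ) else 0) * f i' a')
      = if h : c < l then f ⟨c, h⟩ a else 0 := by
  have inner : ∀ i' : Fin l,
      (∑ a' : Fin m, (if c = (i' : ℕ) ∧ a = a' then (1:ℝ) else 0) * f i' a')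
        = if c = (i' : ℕ) then f i' a else 0 := by
    intro i'
    by_cases hc : c = (i' : ℕ)
    · simp only [hc, true_and, if_pos rfl, ite_mul, one_mul, zero_mul]
      rw [Finset.sum_ite_eq Finset.univ a fun a' => f i' a']
      simp
    · simp [hc]
  rw [Finset.sum_congr rfl fun i' _ => inner i']
  split_ifs with h
  · rw [Finset.sum_eq_single (⟨c, h⟩ : Fin l)]
    · simp
    · intro b _ hb
      have : c ≠ (b : ℕ) := by
        intro hcb; exact hb (by ext; simp [hcb.symm])
      simp [this]
    · simp
  · apply Finset.sum_eq_zero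
    intro i' _
    have : c ≠ (i' : ℕ) := fun hc => h (hc ▸ i'.isLt)
    simp [this]

lemma sum_ind_fm {m : ℕ} (P : Prop) [Decidable P] (a : Fin m) (g : Fin m → ℝ) :
    (∑ a' : Fin m, (if P ∧ a = a' then (1:ℝ) else 0) * g a')
      = if P then g a else 0 := by
  by_cases hP : P
  · simp only [hP, true_and, if_pos hP, ite_mul, one_mul, zero_mul]
    rw [Finset.sum_ite_eq Finset.univ a g]
    simp
  · simp [hP]

lemma Kshift_mulVec {l m : ℕ} (U Y : ℕ → Fin m → ℝ) (k : ℕ) (hk : l ≤ k) :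
    (Kshift l m).mulVec (Sum.elim (Sum.elim (xi l U Y k) (U k)) (Y k))
      = xi l U Y (k + 1) := by
  have hsub : k + 1 - l = k - l + 1 := by omega
  funext r
  have expand : ∀ r' : rindex l m, (Kshift l m).mulVec
      (Sum.elim (Sum.elim (xi l U Y k) (U k)) (Y k)) r' =
      ∑ c : (rindex l m ⊕ Fin m) ⊕ Fin m, Kshift l m r' c *
        (Sum.elim (Sum.elim (xi l U Y k) (U k)) (Y k)) c := fun _ => rfl
  rw [expand]
  rcases r with ⟨i, a⟩ | ⟨i, a⟩
  · rw [Fintype.sum_sum_type]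
    simp only [Fintype.sum_sum_type, Fintype.sum_prod_type]
    have h2 : ∀ p : Fin l × Fin m,
        Kshift l m (Sum.inl (i, a)) (Sum.inl (Sum.inl (Sum.inr p))) = 0 := fun p => rfl
    have h4 : ∀ b : Fin m, Kshift l m (Sum.inl (i, a)) (Sum.inr b) = 0 := fun b => rfl
    simp only [Sum.elim_inl, Sum.elim_inr]
    have e1 : (∑ i' : Fin l, ∑ a' : Fin m,
        Kshift l m (Sum.inl (i, a)) (Sum.inl (Sum.inl (Sum.inl (i', a')))) *
          xi l U Y k (Sum.inl (i', a')))
        = ∑ i' : Fin l, ∑ a' : Fin m,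
            (if (i : ℕ) + 1 = (i' : ℕ) ∧ a = a' then (1:ℝ) else 0) *
              xi l U Y k (Sum.inl (i', a')) := rfl
    have e3 : (∑ a' : Fin m, Kshift l m (Sum.inl (i, a)) (Sum.inl (Sum.inr a')) * U k a')
        = ∑ a' : Fin m, (if (i : ℕ) + 1 = l ∧ a = a' then (1:ℝ) else 0) * U k a' := rfl
    rw [e1, e3]
    simp only [h2, h4, zero_mul, Finset.sum_const_zero, add_zero]
    rw [sum_ind_fin ((i : ℕ) + 1) a (fun i' a' => xi l U Y k (Sum.inl (i', a'))),
      sum_ind_fm ((i : ℕ) + 1 = l) a (U k)]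
    have hil : (i : ℕ) + 1 ≤ l := i.isLt
    rcases lt_or_eq_of_le hil with h | h
    · rw [dif_pos h, if_neg (by omega)]
      simp only [xi, Sum.elim_inl, add_zero]
      congr 1
      omega
    · rw [dif_neg (by omega), if_pos h]
      simp only [xi, Sum.elim_inl, zero_add]
      congr 1
      omega
  · rw [Fintype.sum_sum_type]
    simp only [Fintype.sum_sum_type, Fintype.sum_prod_type]
    have h1 : ∀ p : Fin l × Fin m,
        Kshift l m (Sum.inr (i, a)) (Sum.inl (Sum.inl (Sum.inl p))) = 0 := fun p => rfl
    have h3 : ∀ b : Fin m, Kshift l m (Sum.inr (i, a)) (Sum.inl (Sum.inr b)) = 0 := fun b => rfl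
    simp only [Sum.elim_inl, Sum.elim_inr]
    have e2 : (∑ i' : Fin l, ∑ a' : Fin m,
        Kshift l m (Sum.inr (i, a)) (Sum.inl (Sum.inl (Sum.inr (i', a')))) *
          xi l U Y k (Sum.inr (i', a')))
        = ∑ i' : Fin l, ∑ a' : Fin m,
            (if (i : ℕ) + 1 = (i' : ℕ) ∧ a = a' then (1:ℝ) else 0) *
              xi l U Y k (Sum.inr (i', a')) := rfl
    have e4 : (∑ a' : Fin m, Kshift l m (Sum.inr (i, a)) (Sum.inr a') * Y k a')
        = ∑ a' : Fin m, (if (i : ℕ) + 1 = l ∧ a = a' then (1:ℝ) else 0) * Y k a' := rfl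
    rw [e2, e4]
    simp only [h1, h3, zero_mul, Finset.sum_const_zero, add_zero, zero_add]
    rw [sum_ind_fin ((i : ℕ) + 1) a (fun i' a' => xi l U Y k (Sum.inr (i', a'))),
      sum_ind_fm ((i : ℕ) + 1 = l) a (Y k)]
    have hil : (i : ℕ) + 1 ≤ l := i.isLt
    rcases lt_or_eq_of_le hil with h | h
    · rw [dif_pos h, if_neg (by omega)]
      simp only [xi, Sum.elim_inr, add_zero]
      congr 1
      omega
    · rw [dif_neg (by omega), if_pos h]
      simp only [xi, Sum.elim_inr, zero_add]
      congr 1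
      omega


/-- The system matrix Z = (B₁ ⋯ B_l, −A₁ ⋯ −A_l, D). -/
def Zmat {m : ℕ} (l : ℕ) (Amats Bmats : Fin l → Matrix (Fin m) (Fin m) ℝ)
    (D : Matrix (Fin m) (Fin m) ℝ) : Matrix (Fin m) (rindex l m ⊕ Fin m) ℝ :=
  Matrix.of fun a c =>
    match c with
    | .inl (.inl (i, b)) => Bmats i a b
    | .inl (.inr (i, b)) => -(Amats i a b)
    | .inr b => D a b

lemma dotmv {k k' : Type*} [Fintype k] [Fintype k'] (A : Matrix k k' ℝ) (x : k' → ℝ)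
    (y : k → ℝ) : (A *ᵥ x) ⬝ᵥ y = x ⬝ᵥ (Aᵀ *ᵥ y) := by
  rw [Matrix.mulVec_transpose, dotProduct_comm, Matrix.dotProduct_mulVec,
    dotProduct_comm]

lemma Zmat_mulVec {m l : ℕ} (Amats Bmats : Fin l → Matrix (Fin m) (Fin m) ℝ)
    (D : Matrix (Fin m) (Fin m) ℝ) (ξ : rindex l m → ℝ) (U : Fin m → ℝ) :
    (Zmat l Amats Bmats D) *ᵥ (Sum.elim ξ U)
      = -(∑ i : Fin l, (Amats i) *ᵥ (fun b => ξ (Sum.inr (i, b))))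
        + D *ᵥ U + ∑ i : Fin l, (Bmats i) *ᵥ (fun b => ξ (Sum.inl (i, b))) := by
  funext a
  have : ((Zmat l Amats Bmats D) *ᵥ (Sum.elim ξ U)) a
      = ∑ c, Zmat l Amats Bmats D a c * Sum.elim ξ U c := rfl
  rw [this]
  simp only [Fintype.sum_sum_type, Fintype.sum_prod_type, Sum.elim_inl, Sum.elim_inr]
  have hZ1 : ∀ (i : Fin l) (b : Fin m),
      Zmat l Amats Bmats D a (Sum.inl (Sum.inl (i, b))) = Bmats i a b := fun _ _ => rfl
  have hZ2 : ∀ (i : Fin l) (b : Fin m),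
      Zmat l Amats Bmats D a (Sum.inl (Sum.inr (i, b))) = -(Amats i a b) := fun _ _ => rfl
  have hZ3 : ∀ b : Fin m, Zmat l Amats Bmats D a (Sum.inr b) = D a b := fun _ => rfl
  simp only [hZ1, hZ2, hZ3]
  simp only [Pi.add_apply, Pi.neg_apply, Finset.sum_apply, Matrix.mulVec, dotProduct,
    neg_mul, Finset.sum_neg_distrib]
  ring

lemma Zmat_graph {m l : ℕ} (Amats Bmats : Fin l → Matrix (Fin m) (Fin m) ℝ)
    (D : Matrix (Fin m) (Fin m) ℝ) (U Y : ℕ → Fin m → ℝ) (k : ℕ)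
    (h : Y k = -(∑ i : Fin l, (Amats i) *ᵥ (Y (k - l + (i : ℕ)))) + D *ᵥ (U k)
        + ∑ i : Fin l, (Bmats i) *ᵥ (U (k - l + (i : ℕ)))) :
    Y k = (Zmat l Amats Bmats D) *ᵥ (Sum.elim (xi l U Y k) (U k)) := by
  rw [Zmat_mulVec, h]
  rfl

lemma Zmat_data {m mv l N : ℕ} (Amats Bmats : Fin l → Matrix (Fin m) (Fin m) ℝ)
    (D : Matrix (Fin m) (Fin m) ℝ) (Bv : Matrix (Fin m) (Fin mv) ℝ)
    (u y : ℕ → Fin m → ℝ) (v : ℕ → Fin mv → ℝ)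
    (hdata : ∀ k, l ≤ k → k < N →
      y k = -(∑ i : Fin l, (Amats i) *ᵥ (y (k - l + (i : ℕ))))
        + D *ᵥ (u k) + (∑ i : Fin l, (Bmats i) *ᵥ (u (k - l + (i : ℕ))))
        + Bv *ᵥ (v k)) :
    Zmat l Amats Bmats D * Matrix.fromRows (XiMat l N u y) (UXi m l N u)
      = UXi m l N y - Bv * Matrix.of fun a (j : Fin (N - l)) => v (l + (j : ℕ)) a := by
  funext a j
  have hcol : (fun c => Matrix.fromRows (XiMat l N u y) (UXi m l N u) c j)
      = Sum.elim (xi l u y (l + (j : ℕ))) (u (l + (j : ℕ))) := by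
    funext c
    rcases c with c | b <;> rfl
  have hentry : (Zmat l Amats Bmats D * Matrix.fromRows (XiMat l N u y) (UXi m l N u)) a j
      = ((Zmat l Amats Bmats D) *ᵥ (Sum.elim (xi l u y (l + (j : ℕ))) (u (l + (j : ℕ))))) a := by
    rw [← hcol]
    rfl
  rw [hentry, Zmat_mulVec]
  have hk := hdata (l + (j : ℕ)) (Nat.le_add_right _ _) (by omega)
  have hyk : y (l + (j : ℕ)) a
      = (-(∑ i : Fin l, (Amats i) *ᵥ (y (l + (j : ℕ) - l + (i : ℕ))))
        + D *ᵥ (u (l + (j : ℕ))) + (∑ i : Fin l, (Bmats i) *ᵥ (u (l + (j : ℕ) - l + (i : ℕ))))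
        + Bv *ᵥ (v (l + (j : ℕ)))) a := by rw [← hk]
  have hsub : (UXi m l N y - Bv * Matrix.of fun a (j : Fin (N - l)) => v (l + (j : ℕ)) a) a j
      = y (l + (j : ℕ)) a - (Bv *ᵥ (v (l + (j : ℕ)))) a := by
    simp only [Matrix.sub_apply, UXi, Matrix.of_apply]
    congr 1
  rw [hsub, hyk]
  simp only [Pi.add_apply, Pi.neg_apply, Finset.sum_apply]
  have hxi1 : ∀ i : Fin l, (fun b => xi l u y (l + (j : ℕ)) (Sum.inl (i, b)))
      = u (l + (j : ℕ) - l + (i : ℕ)) := fun i => rfl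
  have hxi2 : ∀ i : Fin l, (fun b => xi l u y (l + (j : ℕ)) (Sum.inr (i, b)))
      = y (l + (j : ℕ) - l + (i : ℕ)) := fun i => rfl
  simp only [hxi1, hxi2]
  ring


lemma dual_qmi {m mv l N : ℕ}
    (Amats Bmats : Fin l → Matrix (Fin m) (Fin m) ℝ) (D : Matrix (Fin m) (Fin m) ℝ)
    (Bv : Matrix (Fin m) (Fin mv) ℝ)
    (Q : Matrix (Fin (N - l)) (Fin (N - l)) ℝ) (S : Matrix (Fin (N - l)) (Fin mv) ℝ)
    (R : Matrix (Fin mv) (Fin mv) ℝ) (hQs : Q.IsSymm)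
    (hQn : ∀ x : Fin (N - l) → ℝ, x ⬝ᵥ Q *ᵥ x ≤ 0)
    (u y : ℕ → Fin m → ℝ) (v : ℕ → Fin mv → ℝ)
    (hV : inNoiseSet Q S R (Matrix.of fun a (j : Fin (N - l)) => v (l + (j : ℕ)) a))
    (hinv : IsUnit (QSRbar l N u y Q S R Bv).det)
    (hZH : Zmat l Amats Bmats D * Matrix.fromRows (XiMat l N u y) (UXi m l N u)
      = UXi m l N y - Bv * Matrix.of fun a (j : Fin (N - l)) => v (l + (j : ℕ)) a)
    (z : (rindex l m ⊕ Fin m) ⊕ Fin m → ℝ)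
    (hz : (fun b => z (Sum.inr b)) = (Zmat l Amats Bmats D) *ᵥ (fun c => z (Sum.inl c))) :
    z ⬝ᵥ (QSRbar l N u y Q S R Bv)⁻¹ *ᵥ z ≤ 0 := by
  classical
  set Vm : Matrix (Fin mv) (Fin (N - l)) ℝ :=
    Matrix.of fun a (j : Fin (N - l)) => v (l + (j : ℕ)) a with hVm
  set Pm : Matrix ((rindex l m ⊕ Fin m) ⊕ Fin m) ((rindex l m ⊕ Fin m) ⊕ Fin m) ℝ :=
    QSRbar l N u y Q S R Bv with hPm
  set h : (rindex l m ⊕ Fin m) ⊕ Fin m → ℝ := Pm⁻¹ *ᵥ z with hh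
  have hPh : Pm *ᵥ h = z := by
    rw [hh, Matrix.mulVec_mulVec, Matrix.mul_nonsing_inv _ hinv, Matrix.one_mulVec]
  set s : Fin (N - l) ⊕ Fin m → ℝ := (Mdata l N u y)ᵀ *ᵥ h with hs
  set s₁ : Fin (N - l) → ℝ := fun j => s (Sum.inl j) with hs₁
  set s₂ : Fin m → ℝ := fun b => s (Sum.inr b) with hs₂
  set t : Fin mv → ℝ := Bvᵀ *ᵥ s₂ with ht
  set av : Fin (N - l) → ℝ := Vmᵀ *ᵥ t with hav
  set w₁ : Fin (N - l) → ℝ := Q *ᵥ s₁ + S *ᵥ t with hw₁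
  set w₂ : Fin m → ℝ := Bv *ᵥ (Sᵀ *ᵥ s₁ + R *ᵥ t) with hw₂
  have hsum : s = Sum.elim s₁ s₂ := by funext c; rcases c with c | c <;> rfl
  have hw : Wmat Q S R Bv *ᵥ s = Sum.elim w₁ w₂ := by
    rw [hsum]
    simp only [Wmat]
    rw [Matrix.fromBlocks_mulVec]
    simp only [Sum.elim_comp_inl, Sum.elim_comp_inr]
    have c1 : Q *ᵥ s₁ + (S * Bvᵀ) *ᵥ s₂ = w₁ := by
      rw [hw₁, ht]
      simp only [Matrix.mulVec_mulVec]
    have c2 : (Bv * Sᵀ) *ᵥ s₁ + (Bv * R * Bvᵀ) *ᵥ s₂ = w₂ := by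
      rw [hw₂, Matrix.mulVec_add, ht]
      simp only [Matrix.mulVec_mulVec]
      rw [← Matrix.mul_assoc]
    rw [c1, c2]
  have hzM : z = Mdata l N u y *ᵥ Sum.elim w₁ w₂ := by
    rw [← hw, ← hPh, hPm]
    simp only [QSRbar]
    rw [← Matrix.mulVec_mulVec, ← Matrix.mulVec_mulVec, ← hs]
  have hz1 : (fun c => z (Sum.inl c))
      = Matrix.fromRows (XiMat l N u y) (UXi m l N u) *ᵥ w₁ := by
    funext c
    rw [hzM]
    show (Mdata l N u y *ᵥ Sum.elim w₁ w₂) (Sum.inl c) = _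
    rw [Mdata, Matrix.fromBlocks_mulVec]
    simp
  have hz2 : (fun b => z (Sum.inr b)) = UXi m l N y *ᵥ w₁ + w₂ := by
    funext b
    rw [hzM]
    show (Mdata l N u y *ᵥ Sum.elim w₁ w₂) (Sum.inr b) = _
    rw [Mdata, Matrix.fromBlocks_mulVec]
    simp
  have hw₂' : w₂ = -(Bv *ᵥ (Vm *ᵥ w₁)) := by
    have heq := hz
    rw [hz1, hz2, Matrix.mulVec_mulVec, hZH, Matrix.sub_mulVec, ← Matrix.mulVec_mulVec] at heq
    have : UXi m l N y *ᵥ w₁ + w₂ = UXi m l N y *ᵥ w₁ + -(Bv *ᵥ (Vm *ᵥ w₁)) := by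
      rw [heq]
      abel
    exact add_left_cancel this
  have hφ : z ⬝ᵥ Pm⁻¹ *ᵥ z = w₁ ⬝ᵥ s₁ - w₁ ⬝ᵥ av := by
    have e1 : z ⬝ᵥ Pm⁻¹ *ᵥ z = z ⬝ᵥ h := rfl
    rw [e1]
    conv_lhs => rw [hzM]
    rw [dotmv, ← hs, hsum, sumElim_dotProduct_sumElim, hw₂',
      neg_dotProduct, dotmv, ← ht, dotmv, ← hav]
    ring
  set A1 : ℝ := s₁ ⬝ᵥ Q *ᵥ s₁ with hA1
  set A2 : ℝ := av ⬝ᵥ Q *ᵥ s₁ with hA2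
  set A3 : ℝ := av ⬝ᵥ Q *ᵥ av with hA3
  set B1 : ℝ := s₁ ⬝ᵥ S *ᵥ t with hB1
  set B2 : ℝ := av ⬝ᵥ S *ᵥ t with hB2
  set C1 : ℝ := t ⬝ᵥ R *ᵥ t with hC1
  have hsymQ : ∀ x y₀ : Fin (N - l) → ℝ, x ⬝ᵥ Q *ᵥ y₀ = y₀ ⬝ᵥ Q *ᵥ x := by
    intro x y₀
    rw [dotProduct_comm, dotmv, hQs.eq]
  have hφ2 : z ⬝ᵥ Pm⁻¹ *ᵥ z = A1 + B1 - (A2 + B2) := by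
    rw [hφ, hw₁, add_dotProduct, add_dotProduct,
      dotProduct_comm (Q *ᵥ s₁) s₁, dotProduct_comm (S *ᵥ t) s₁,
      dotProduct_comm (Q *ᵥ s₁) av, dotProduct_comm (S *ᵥ t) av,
      hA1, hB1, hA2, hB2]
  have key2 : A2 + B1 + B2 + C1 = 0 := by
    have e1 : w₂ ⬝ᵥ s₂ = B1 + C1 := by
      rw [hw₂, dotmv, ← ht, add_dotProduct, dotmv, Matrix.transpose_transpose,
        dotProduct_comm (R *ᵥ t) t, hB1, hC1]
    have e2 : w₂ ⬝ᵥ s₂ = -(A2 + B2) := by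
      rw [hw₂', neg_dotProduct, dotmv, ← ht, dotmv, ← hav, hw₁,
        add_dotProduct, dotProduct_comm (Q *ᵥ s₁) av,
        dotProduct_comm (S *ᵥ t) av, hA2, hB2]
    linarith [e1, e2]
  have key3 : 0 ≤ A3 + 2 * B2 + C1 := by
    have hψ := hV.2 t
    rw [← Matrix.mulVec_mulVec, ← Matrix.mulVec_mulVec, ← dotmv,
      Matrix.fromRows_mulVec, Matrix.one_mulVec, ← hav, Matrix.fromBlocks_mulVec] at hψ
    simp only [Sum.elim_comp_inl, Sum.elim_comp_inr] at hψ
    rw [sumElim_dotProduct_sumElim, dotProduct_add,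
      dotProduct_add] at hψ
    have e3 : t ⬝ᵥ Sᵀ *ᵥ av = B2 := by
      rw [← dotmv, dotProduct_comm, hB2]
    rw [e3, ← hA3, ← hB2, ← hC1] at hψ
    linarith
  have hQneg : A1 - 2 * A2 + A3 ≤ 0 := by
    have := hQn (s₁ - av)
    rw [sub_dotProduct, Matrix.mulVec_sub, dotProduct_sub,
      dotProduct_sub, hsymQ s₁ av] at this
    linarith [this]
  rw [hφ2]
  linarith [key2, key3, hQneg]


lemma dissipation {m mv l N : ℕ}
    (Amats Bmats : Fin l → Matrix (Fin m) (Fin m) ℝ) (D : Matrix (Fin m) (Fin m) ℝ)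
    (Bv : Matrix (Fin m) (Fin mv) ℝ)
    (Q : Matrix (Fin (N - l)) (Fin (N - l)) ℝ) (S : Matrix (Fin (N - l)) (Fin mv) ℝ)
    (R : Matrix (Fin mv) (Fin mv) ℝ) (hQs : Q.IsSymm)
    (hQn : ∀ x : Fin (N - l) → ℝ, x ⬝ᵥ Q *ᵥ x ≤ 0)
    (u y : ℕ → Fin m → ℝ) (v : ℕ → Fin mv → ℝ)
    (hV : inNoiseSet Q S R (Matrix.of fun a (j : Fin (N - l)) => v (l + (j : ℕ)) a))
    (hinv : IsUnit (QSRbar l N u y Q S R Bv).det)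
    (hZH : Zmat l Amats Bmats D * Matrix.fromRows (XiMat l N u y) (UXi m l N u)
      = UXi m l N y - Bv * Matrix.of fun a (j : Fin (N - l)) => v (l + (j : ℕ)) a)
    (γ μ : ℝ) (hμ : 0 ≤ μ)
    (P : Matrix (rindex l m) (rindex l m) ℝ) (hP : IsPosSemidefR P)
    (hLMI : IsNegSemidef
      ((Gmat l m)ᵀ * PhiMat P ((-(γ ^ 2)) • (1 : Matrix (Fin m) (Fin m) ℝ)) 1 * Gmat l m
        - μ • (QSRbar l N u y Q S R Bv)⁻¹))
    (U Y : ℕ → Fin m → ℝ)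
    (hzero : ∀ k, k < l → U k = 0 ∧ Y k = 0)
    (hgraph : ∀ k, l ≤ k → Y k = (Zmat l Amats Bmats D) *ᵥ (Sum.elim (xi l U Y k) (U k))) :
    ∀ K : ℕ, (∑ k ∈ Finset.range K, Y (l + k) ⬝ᵥ Y (l + k))
      ≤ γ ^ 2 * ∑ k ∈ Finset.range K, U (l + k) ⬝ᵥ U (l + k) := by
  classical
  set ξ : ℕ → rindex l m → ℝ := xi l U Y with hξ
  -- one-step dissipation inequality
  have step : ∀ k, l ≤ k →
      Y k ⬝ᵥ Y k - γ ^ 2 * (U k ⬝ᵥ U k)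
        ≤ ξ k ⬝ᵥ P *ᵥ ξ k - ξ (k + 1) ⬝ᵥ P *ᵥ ξ (k + 1) := by
    intro k hk
    set gin : rindex l m ⊕ Fin m → ℝ := Sum.elim (ξ k) (U k) with hgin
    set g : (rindex l m ⊕ Fin m) ⊕ Fin m → ℝ := Sum.elim gin (Y k) with hg
    have hzg : (fun b => g (Sum.inr b)) = (Zmat l Amats Bmats D) *ᵥ (fun c => g (Sum.inl c)) := by
      have h1 : (fun b => g (Sum.inr b)) = Y k := rfl
      have h2 : (fun c => g (Sum.inl c)) = gin := rfl
      rw [h1, h2, hgin, hξ]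
      exact hgraph k hk
    have E3 : g ⬝ᵥ (QSRbar l N u y Q S R Bv)⁻¹ *ᵥ g ≤ 0 :=
      dual_qmi Amats Bmats D Bv Q S R hQs hQn u y v hV hinv hZH g hzg
    have E2 := hLMI.2 g
    rw [Matrix.sub_mulVec, dotProduct_sub, Matrix.smul_mulVec,
      dotProduct_smul] at E2
    -- compute G *ᵥ g
    have hGg : Gmat l m *ᵥ g
        = Sum.elim (Sum.elim (ξ k) (ξ (k + 1))) (Sum.elim (U k) (Y k)) := by
      simp only [Gmat]
      rw [Matrix.fromRows_mulVec, Matrix.fromRows_mulVec, Matrix.fromRows_mulVec]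
      have c1 : Matrix.fromCols
          (Matrix.fromCols (1 : Matrix (rindex l m) (rindex l m) ℝ) 0) 0 *ᵥ g = ξ k := by
        rw [hg, Matrix.fromCols_mulVec_sumElim, hgin, Matrix.fromCols_mulVec_sumElim]
        simp [Matrix.one_mulVec, Matrix.zero_mulVec]
      have c2 : Kshift l m *ᵥ g = ξ (k + 1) := by
        rw [hg, hgin, hξ]
        exact Kshift_mulVec U Y k hk
      have c3 : Matrix.fromCols
          (Matrix.fromCols (0 : Matrix (Fin m) (rindex l m) ℝ) 1) 0 *ᵥ g = U k := by
        rw [hg, Matrix.fromCols_mulVec_sumElim, hgin, Matrix.fromCols_mulVec_sumElim]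
        simp [Matrix.one_mulVec, Matrix.zero_mulVec]
      have c4 : Matrix.fromCols
          (Matrix.fromCols (0 : Matrix (Fin m) (rindex l m) ℝ) 0) 1 *ᵥ g = Y k := by
        rw [hg, Matrix.fromCols_mulVec_sumElim, hgin, Matrix.fromCols_mulVec_sumElim]
        simp [Matrix.one_mulVec, Matrix.zero_mulVec]
      rw [c1, c2, c3, c4]
    have E1 : g ⬝ᵥ ((Gmat l m)ᵀ * PhiMat P ((-(γ ^ 2)) • (1 : Matrix (Fin m) (Fin m) ℝ)) 1
        * Gmat l m) *ᵥ g
        = -(ξ k ⬝ᵥ P *ᵥ ξ k) + ξ (k + 1) ⬝ᵥ P *ᵥ ξ (k + 1)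
          + (-(γ ^ 2) * (U k ⬝ᵥ U k) + Y k ⬝ᵥ Y k) := by
      rw [← Matrix.mulVec_mulVec, ← Matrix.mulVec_mulVec, ← dotmv, hGg]
      simp only [PhiMat]
      rw [Matrix.fromBlocks_mulVec]
      simp only [Sum.elim_comp_inl, Sum.elim_comp_inr]
      rw [Matrix.fromBlocks_mulVec, Matrix.fromBlocks_mulVec]
      simp only [Sum.elim_comp_inl, Sum.elim_comp_inr, Matrix.zero_mulVec, add_zero, zero_add,
        Matrix.neg_mulVec, Matrix.one_mulVec, Matrix.smul_mulVec]
      rw [sumElim_dotProduct_sumElim, sumElim_dotProduct_sumElim,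
        sumElim_dotProduct_sumElim]
      rw [dotProduct_neg, dotProduct_smul, smul_eq_mul]
    rw [E1] at E2
    have E4 : μ • (g ⬝ᵥ (QSRbar l N u y Q S R Bv)⁻¹ *ᵥ g) ≤ 0 := by
      rw [smul_eq_mul]
      exact mul_nonpos_of_nonneg_of_nonpos hμ E3
    linarith [E2, E4]
  -- telescoping
  have hξl : ξ l = 0 := by
    funext r
    rcases r with ⟨i, a⟩ | ⟨i, a⟩
    · have : U (l - l + (i : ℕ)) = 0 := (hzero _ (by omega)).1
      show U (l - l + (i : ℕ)) a = 0
      rw [this]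
      rfl
    · have : Y (l - l + (i : ℕ)) = 0 := (hzero _ (by omega)).2
      show Y (l - l + (i : ℕ)) a = 0
      rw [this]
      rfl
  have claim : ∀ K : ℕ, (∑ k ∈ Finset.range K, Y (l + k) ⬝ᵥ Y (l + k))
      + ξ (l + K) ⬝ᵥ P *ᵥ ξ (l + K)
      ≤ γ ^ 2 * ∑ k ∈ Finset.range K, U (l + k) ⬝ᵥ U (l + k) := by
    intro K
    induction K with
    | zero =>
      simp [hξl]
    | succ K ih =>
      rw [Finset.sum_range_succ, Finset.sum_range_succ]
      have hstep := step (l + K) (Nat.le_add_right _ _)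
      have : l + (K + 1) = l + K + 1 := by omega
      rw [this]
      nlinarith [hstep, ih]
  intro K
  have := claim K
  have hpos := hP.2 (ξ (l + K))
  linarith

lemma evec_sum_apply {m : ℕ} {ι : Type*} (s : Finset ι) (f : ι → Evec m) (a : Fin m) :
    (∑ i ∈ s, f i) a = ∑ i ∈ s, f i a := by
  classical
  induction s using Finset.cons_induction with
  | empty => rfl
  | cons i s hi ih => rw [Finset.sum_cons, Finset.sum_cons, ← ih]; rfl

lemma act_sum {a b : ℕ} {ι : Type*} (M : Matrix (Fin a) (Fin b) ℝ) (s : Finset ι)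
    (f : ι → Evec b) : act M (∑ i ∈ s, f i) = ∑ i ∈ s, act M (f i) := map_sum _ _ _

lemma act_mul {a b c : ℕ} (M : Matrix (Fin a) (Fin b) ℝ) (N : Matrix (Fin b) (Fin c) ℝ)
    (v : Evec c) : act (M * N) v = act M (act N v) := by
  ext i
  rw [act_apply, act_apply]
  have hN : ∀ j, act N v j = ∑ p, (N j p : ℂ) * v p := fun j => act_apply N v j
  simp only [hN, Matrix.mul_apply]
  push_cast
  simp only [Finset.sum_mul, Finset.mul_sum]
  rw [Finset.sum_comm]
  refine Finset.sum_congr rfl fun p _ => Finset.sum_congr rfl fun j _ => by ring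

lemma re_act {a b : ℕ} (M : Matrix (Fin a) (Fin b) ℝ) (w : Evec b) (i : Fin a) :
    (act M w i).re = (M *ᵥ fun j => (w j).re) i := by
  rw [act_apply, Complex.re_sum]
  simp [Matrix.mulVec, dotProduct, Complex.mul_re]

lemma im_act {a b : ℕ} (M : Matrix (Fin a) (Fin b) ℝ) (w : Evec b) (i : Fin a) :
    (act M w i).im = (M *ᵥ fun j => (w j).im) i := by
  rw [act_apply, Complex.im_sum]
  simp [Matrix.mulVec, dotProduct, Complex.mul_im]

lemma graph_re {m l : ℕ} (Amats Bmats : Fin l → Matrix (Fin m) (Fin m) ℝ)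
    (D : Matrix (Fin m) (Fin m) ℝ) (uc yc : ℕ → Evec m) (k : ℕ)
    (hde : yc k = -(∑ i : Fin l, act (Amats i) (yc (k - l + (i : ℕ))))
      + act D (uc k) + ∑ i : Fin l, act (Bmats i) (uc (k - l + (i : ℕ)))) :
    (fun a => (yc k a).re)
      = -(∑ i : Fin l, (Amats i) *ᵥ (fun a => (yc (k - l + (i : ℕ)) a).re))
        + D *ᵥ (fun a => (uc k a).re)
        + ∑ i : Fin l, (Bmats i) *ᵥ (fun a => (uc (k - l + (i : ℕ)) a).re) := by
  funext a
  have h2 : yc k a = -((∑ i : Fin l, act (Amats i) (yc (k - l + (i : ℕ)))) a)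
      + act D (uc k) a + (∑ i : Fin l, act (Bmats i) (uc (k - l + (i : ℕ)))) a := by
    rw [hde]; rfl
  rw [evec_sum_apply, evec_sum_apply] at h2
  have h3 := congrArg Complex.re h2
  rw [Complex.add_re, Complex.add_re, Complex.neg_re, Complex.re_sum, Complex.re_sum] at h3
  simp only [re_act] at h3
  simp only [Pi.add_apply, Pi.neg_apply, Finset.sum_apply]
  exact h3

lemma graph_im {m l : ℕ} (Amats Bmats : Fin l → Matrix (Fin m) (Fin m) ℝ)
    (D : Matrix (Fin m) (Fin m) ℝ) (uc yc : ℕ → Evec m) (k : ℕ)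
    (hde : yc k = -(∑ i : Fin l, act (Amats i) (yc (k - l + (i : ℕ))))
      + act D (uc k) + ∑ i : Fin l, act (Bmats i) (uc (k - l + (i : ℕ)))) :
    (fun a => (yc k a).im)
      = -(∑ i : Fin l, (Amats i) *ᵥ (fun a => (yc (k - l + (i : ℕ)) a).im))
        + D *ᵥ (fun a => (uc k a).im)
        + ∑ i : Fin l, (Bmats i) *ᵥ (fun a => (uc (k - l + (i : ℕ)) a).im) := by
  funext a
  have h2 : yc k a = -((∑ i : Fin l, act (Amats i) (yc (k - l + (i : ℕ)))) a)
      + act D (uc k) a + (∑ i : Fin l, act (Bmats i) (uc (k - l + (i : ℕ)))) a := by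
    rw [hde]; rfl
  rw [evec_sum_apply, evec_sum_apply] at h2
  have h3 := congrArg Complex.im h2
  rw [Complex.add_im, Complex.add_im, Complex.neg_im, Complex.im_sum, Complex.im_sum] at h3
  simp only [im_act] at h3
  simp only [Pi.add_apply, Pi.neg_apply, Finset.sum_apply]
  exact h3

lemma norm_sq_dot {m : ℕ} (w : Evec m) :
    ‖w‖ ^ 2 = (fun a => (w a).re) ⬝ᵥ (fun a => (w a).re)
      + (fun a => (w a).im) ⬝ᵥ (fun a => (w a).im) := by
  rw [EuclideanSpace.norm_eq, Real.sq_sqrt (by positivity)]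
  rw [dotProduct, dotProduct, ← Finset.sum_add_distrib]
  refine Finset.sum_congr rfl fun a _ => ?_
  rw [Complex.sq_norm, Complex.normSq_apply]

lemma enn_sq_ofReal {m : ℕ} (x : Evec m) :
    (‖x‖₊ : ℝ≥0∞) ^ 2 = ENNReal.ofReal (‖x‖ ^ 2) := by
  rw [ENNReal.ofReal_pow (norm_nonneg _), ← coe_nnnorm, ENNReal.ofReal_coe_nnreal]

end Aux15

/-- Robust data-driven upper bound on `lim_{τ→∞} Γ(T^τ)` from noisy data. -/
theorem stmt15 {n m mv : ℕ} (hn : 1 ≤ n) (hm : 1 ≤ m) (hmv : 1 ≤ mv)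
    (A : Matrix (Fin n) (Fin n) ℝ) (B : Matrix (Fin n) (Fin m) ℝ)
    (C : Matrix (Fin m) (Fin n) ℝ) (D : Matrix (Fin m) (Fin m) ℝ)
    (l N : ℕ) (hl : 1 ≤ l) (hN : 1 ≤ N) (hlag : lag A C ≤ l)
    (Amats Bmats : Fin l → Matrix (Fin m) (Fin m) ℝ)
    -- the true system admits the difference-operator representation
    -- y_k = −A_l y_{k-1} − ⋯ − A_1 y_{k-l} + D u_k + B_l u_{k-1} + ⋯ + B_1 u_{k-l}:
    (hdiff : ∀ (x : ℕ → Evec n) (uc yc : ℕ → Evec m),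
      (∀ k, x (k + 1) = act A (x k) + act B (uc k)) →
      (∀ k, yc k = act C (x k) + act D (uc k)) →
      ∀ k, l ≤ k →
        yc k = -(∑ i : Fin l, act (Amats i) (yc (k - l + (i : ℕ))))
          + act D (uc k) + ∑ i : Fin l, act (Bmats i) (uc (k - l + (i : ℕ))))
    (Bv : Matrix (Fin m) (Fin mv) ℝ)
    (Q : Matrix (Fin (N - l)) (Fin (N - l)) ℝ) (S : Matrix (Fin (N - l)) (Fin mv) ℝ)
    (R : Matrix (Fin mv) (Fin mv) ℝ) (hQ : IsNegDef Q) (hR : R.IsSymm)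
    (u y : ℕ → Fin m → ℝ) (v : ℕ → Fin mv → ℝ)
    -- the measured data is generated by the true system corrupted by the noise v:
    (hdata : ∀ k, l ≤ k → k < N →
      y k = -(∑ i : Fin l, (Amats i).mulVec (y (k - l + (i : ℕ))))
        + D.mulVec (u k) + (∑ i : Fin l, (Bmats i).mulVec (u (k - l + (i : ℕ))))
        + Bv.mulVec (v k))
    -- the noise matrix V* = (v_l ⋯ v_{N-1}) belongs to 𝒱:
    (hV : inNoiseSet Q S R (Matrix.of fun a (j : Fin (N - l)) => v (l + (j : ℕ)) a))
    (hinvQSR : IsUnit (QSRbar l N u y Q S R Bv).det)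
    (γ : ℝ) (hγ : 0 ≤ γ)
    (P : Matrix (rindex l m) (rindex l m) ℝ) (hP : IsPosSemidefR P) (μ : ℝ) (hμ : 0 ≤ μ)
    (hLMI : IsNegSemidef
      ((Gmat l m)ᵀ * PhiMat P ((-(γ ^ 2)) • (1 : Matrix (Fin m) (Fin m) ℝ)) 1 * Gmat l m
        - μ • (QSRbar l N u y Q S R Bv)⁻¹)) :
    ∀ L : ℝ≥0∞,
      Tendsto (fun τ : ℕ => maxGain (ltwoTau m (τ + 1)) (TtauMap A B C D (τ + 1))) atTop (𝓝 L) →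
        L ≤ ENNReal.ofReal γ := by
  classical
  intro L htend
  refine le_of_tendsto' htend ?_
  intro τ
  rw [maxGain]
  refine iSup₂_le ?_
  rintro uu ⟨hudom, hune⟩
  -- the shifted complex trajectory
  set uc : ℕ → Evec m := fun k => if k < l then 0 else uu (k - l) with huc
  set x : ℕ → Evec n := fun k =>
    Nat.rec (0 : Evec n) (fun j xj => act A xj + act B (uc j)) k with hx
  set yc : ℕ → Evec m := fun k => act C (x k) + act D (uc k) with hyc
  have hxs : ∀ k, x (k + 1) = act A (x k) + act B (uc k) := fun k => rfl
  have hde := hdiff x uc yc hxs (fun k => rfl)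
  have hucz : ∀ k, k < l → uc k = 0 := by
    intro k hk
    rw [huc]
    simp only
    rw [if_pos hk]
  have hucs : ∀ k, uc (l + k) = uu k := by
    intro k
    rw [huc]
    simp only
    rw [if_neg (show ¬ (l + k < l) by omega)]
    have : l + k - l = k := by omega
    rw [this]
  have hxzero : ∀ k, k ≤ l → x k = 0 := by
    intro k
    induction k with
    | zero => intro _; rfl
    | succ k ih =>
      intro hk
      rw [hxs, ih (by omega), hucz k (by omega), act_zero, act_zero, add_zero]
  have hycz : ∀ k, k < l → yc k = 0 := by
    intro k hk
    rw [hyc]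
    simp only
    rw [hxzero k (by omega), hucz k hk, act_zero, act_zero, add_zero]
  have hxl : ∀ k, x (l + k) = ∑ i ∈ Finset.range k, act (A ^ (k - 1 - i) * B) (uu i) := by
    intro k
    induction k with
    | zero => simpa using hxzero l le_rfl
    | succ k ih =>
      have e0 : l + (k + 1) = (l + k) + 1 := rfl
      rw [e0, hxs, ih, hucs, Finset.sum_range_succ, act_sum]
      congr 1
      · refine Finset.sum_congr rfl fun i hi => ?_
        rw [Finset.mem_range] at hi
        have hexp : k + 1 - 1 - i = (k - 1 - i) + 1 := by omega
        rw [hexp, pow_succ', Matrix.mul_assoc]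
        exact (act_mul _ _ _).symm
      · have hexp : k + 1 - 1 - k = 0 := by omega
        rw [hexp, pow_zero, Matrix.one_mul]
  have hout : ∀ k, yc (l + k) = output A B C D uu k := by
    intro k
    rw [hyc]
    simp only
    rw [hxl, hucs, output, act_sum, add_comm]
    congr 1
    refine Finset.sum_congr rfl fun i _ => ?_
    rw [← act_mul, ← Matrix.mul_assoc]
  -- real and imaginary parts
  set Ure : ℕ → Fin m → ℝ := fun k a => (uc k a).re with hUre
  set Uim : ℕ → Fin m → ℝ := fun k a => (uc k a).im with hUim
  set Yre : ℕ → Fin m → ℝ := fun k a => (yc k a).re with hYre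
  set Yim : ℕ → Fin m → ℝ := fun k a => (yc k a).im with hYim
  have hzero_re : ∀ k, k < l → Ure k = 0 ∧ Yre k = 0 := by
    intro k hk
    constructor <;> funext a
    · rw [hUre]; simp only; rw [hucz k hk]; rfl
    · rw [hYre]; simp only; rw [hycz k hk]; rfl
  have hzero_im : ∀ k, k < l → Uim k = 0 ∧ Yim k = 0 := by
    intro k hk
    constructor <;> funext a
    · rw [hUim]; simp only; rw [hucz k hk]; rfl
    · rw [hYim]; simp only; rw [hycz k hk]; rfl
  have hgraph_re : ∀ k, l ≤ k →
      Yre k = (Zmat l Amats Bmats D) *ᵥ (Sum.elim (xi l Ure Yre k) (Ure k)) := by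
    intro k hk
    exact Zmat_graph Amats Bmats D Ure Yre k (graph_re Amats Bmats D uc yc k (hde k hk))
  have hgraph_im : ∀ k, l ≤ k →
      Yim k = (Zmat l Amats Bmats D) *ᵥ (Sum.elim (xi l Uim Yim k) (Uim k)) := by
    intro k hk
    exact Zmat_graph Amats Bmats D Uim Yim k (graph_im Amats Bmats D uc yc k (hde k hk))
  -- data consistency and dissipation
  have hQs : Q.IsSymm := hQ.1
  have hQn : ∀ w : Fin (N - l) → ℝ, w ⬝ᵥ Q *ᵥ w ≤ 0 := by
    intro w
    by_cases hw : w = 0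
    · simp [hw]
    · exact le_of_lt (hQ.2 w hw)
  have hZH := Zmat_data Amats Bmats D Bv u y v hdata
  have hdis_re := dissipation Amats Bmats D Bv Q S R hQs hQn u y v hV hinvQSR hZH γ μ hμ P hP
    hLMI Ure Yre hzero_re hgraph_re
  have hdis_im := dissipation Amats Bmats D Bv Q S R hQs hQn u y v hV hinvQSR hZH γ μ hμ P hP
    hLMI Uim Yim hzero_im hgraph_im
  have hnormy : ∀ k, ‖output A B C D uu k‖ ^ 2
      = Yre (l + k) ⬝ᵥ Yre (l + k) + Yim (l + k) ⬝ᵥ Yim (l + k) := by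
    intro k
    rw [← hout k]
    exact norm_sq_dot (yc (l + k))
  have hnormu : ∀ k, ‖uu k‖ ^ 2
      = Ure (l + k) ⬝ᵥ Ure (l + k) + Uim (l + k) ⬝ᵥ Uim (l + k) := by
    intro k
    rw [← hucs k]
    exact norm_sq_dot (uc (l + k))
  have hreal : ∀ K : ℕ, (∑ k ∈ Finset.range K, ‖output A B C D uu k‖ ^ 2)
      ≤ γ ^ 2 * ∑ k ∈ Finset.range K, ‖uu k‖ ^ 2 := by
    intro K
    have h1 := hdis_re K
    have h2 := hdis_im K
    calc (∑ k ∈ Finset.range K, ‖output A B C D uu k‖ ^ 2)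
        = (∑ k ∈ Finset.range K, (Yre (l + k) ⬝ᵥ Yre (l + k) + Yim (l + k) ⬝ᵥ Yim (l + k))) :=
          Finset.sum_congr rfl fun k _ => hnormy k
      _ = (∑ k ∈ Finset.range K, Yre (l + k) ⬝ᵥ Yre (l + k))
          + (∑ k ∈ Finset.range K, Yim (l + k) ⬝ᵥ Yim (l + k)) := Finset.sum_add_distrib
      _ ≤ γ ^ 2 * (∑ k ∈ Finset.range K, Ure (l + k) ⬝ᵥ Ure (l + k))
          + γ ^ 2 * (∑ k ∈ Finset.range K, Uim (l + k) ⬝ᵥ Uim (l + k)) := add_le_add h1 h2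
      _ = γ ^ 2 * ((∑ k ∈ Finset.range K, Ure (l + k) ⬝ᵥ Ure (l + k))
          + (∑ k ∈ Finset.range K, Uim (l + k) ⬝ᵥ Uim (l + k))) := by ring
      _ = γ ^ 2 * ∑ k ∈ Finset.range K,
            (Ure (l + k) ⬝ᵥ Ure (l + k) + Uim (l + k) ⬝ᵥ Uim (l + k)) := by
          rw [Finset.sum_add_distrib]
      _ = γ ^ 2 * ∑ k ∈ Finset.range K, ‖uu k‖ ^ 2 := by
          rw [Finset.sum_congr rfl fun k _ => (hnormu k).symm]
  -- ENNReal bookkeeping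
  set K := τ + 2 with hK
  have hTz : ∀ k, k ∉ Finset.range K → (‖TtauMap A B C D (τ + 1) uu k‖₊ : ℝ≥0∞) ^ 2 = 0 := by
    intro k hk
    rw [Finset.mem_range, not_lt] at hk
    have : TtauMap A B C D (τ + 1) uu k = 0 := by
      rw [TtauMap, if_neg (show ¬ (k ≤ τ + 1) by omega)]
    simp [this]
  have hUz : ∀ k, k ∉ Finset.range K → (‖uu k‖₊ : ℝ≥0∞) ^ 2 = 0 := by
    intro k hk
    rw [Finset.mem_range, not_lt] at hk
    have : uu k = 0 := hudom k (by omega)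
    simp [this]
  have e_T : (∑' k, (‖TtauMap A B C D (τ + 1) uu k‖₊ : ℝ≥0∞) ^ 2)
      = ∑ k ∈ Finset.range K, (‖TtauMap A B C D (τ + 1) uu k‖₊ : ℝ≥0∞) ^ 2 := tsum_eq_sum hTz
  have e_u : (∑' k, (‖uu k‖₊ : ℝ≥0∞) ^ 2)
      = ∑ k ∈ Finset.range K, (‖uu k‖₊ : ℝ≥0∞) ^ 2 := tsum_eq_sum hUz
  have hsum_le : (∑ k ∈ Finset.range K, (‖TtauMap A B C D (τ + 1) uu k‖₊ : ℝ≥0∞) ^ 2)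
      ≤ (ENNReal.ofReal γ) ^ 2 * ∑ k ∈ Finset.range K, (‖uu k‖₊ : ℝ≥0∞) ^ 2 := by
    have lhs_eq : (∑ k ∈ Finset.range K, (‖TtauMap A B C D (τ + 1) uu k‖₊ : ℝ≥0∞) ^ 2)
        = ENNReal.ofReal (∑ k ∈ Finset.range K, ‖TtauMap A B C D (τ + 1) uu k‖ ^ 2) := by
      rw [ENNReal.ofReal_sum_of_nonneg fun i _ => by positivity]
      exact Finset.sum_congr rfl fun k _ => enn_sq_ofReal _
    have rhs_eq : (ENNReal.ofReal γ) ^ 2 * (∑ k ∈ Finset.range K, (‖uu k‖₊ : ℝ≥0∞) ^ 2)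
        = ENNReal.ofReal (γ ^ 2 * ∑ k ∈ Finset.range K, ‖uu k‖ ^ 2) := by
      rw [ENNReal.ofReal_mul (by positivity), ENNReal.ofReal_pow hγ,
        ENNReal.ofReal_sum_of_nonneg fun i _ => by positivity]
      congr 1
      exact Finset.sum_congr rfl fun k _ => enn_sq_ofReal _
    rw [lhs_eq, rhs_eq]
    apply ENNReal.ofReal_le_ofReal
    have hTb : (∑ k ∈ Finset.range K, ‖TtauMap A B C D (τ + 1) uu k‖ ^ 2)
        ≤ ∑ k ∈ Finset.range K, ‖output A B C D uu k‖ ^ 2 := by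
      refine Finset.sum_le_sum fun k _ => ?_
      by_cases hk : k ≤ τ + 1
      · rw [TtauMap, if_pos hk]
      · rw [TtauMap, if_neg hk]
        simp only [norm_zero]
        have h0 : (0:ℝ) ^ 2 = 0 := by norm_num
        rw [h0]
        positivity
    exact le_trans hTb (hreal K)
  have hu_ne_top : (∑' k, (‖uu k‖₊ : ℝ≥0∞) ^ 2) ≠ ⊤ := by
    rw [e_u]
    refine (ENNReal.sum_lt_top.2 fun k _ => ?_).ne
    exact ENNReal.pow_lt_top (ENNReal.coe_lt_top)
  have hu_ne_zero : (∑' k, (‖uu k‖₊ : ℝ≥0∞) ^ 2) ≠ 0 := by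
    have : ∃ k, uu k ≠ 0 := by
      by_contra hcon
      push_neg at hcon
      exact hune (funext hcon)
    obtain ⟨k0, hk0⟩ := this
    have hle : (‖uu k0‖₊ : ℝ≥0∞) ^ 2 ≤ ∑' k, (‖uu k‖₊ : ℝ≥0∞) ^ 2 := ENNReal.le_tsum k0
    intro hzero
    rw [hzero, nonpos_iff_eq_zero, pow_eq_zero_iff (by norm_num)] at hle
    exact hk0 (by simpa using hle)
  have henu_ne_zero : enorm2 uu ≠ 0 := by
    rw [enorm2]
    simp [ENNReal.rpow_eq_zero_iff, hu_ne_zero, hu_ne_top]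
  have henu_ne_top : enorm2 uu ≠ ⊤ := by
    rw [enorm2]
    exact ENNReal.rpow_ne_top_of_nonneg (by norm_num) hu_ne_top
  rw [ENNReal.div_le_iff henu_ne_zero henu_ne_top]
  rw [enorm2, enorm2, e_T, e_u]
  have hmul : ENNReal.ofReal γ * (∑ k ∈ Finset.range K, (‖uu k‖₊ : ℝ≥0∞) ^ 2) ^ (1/2 : ℝ)
      = ((ENNReal.ofReal γ) ^ 2 * ∑ k ∈ Finset.range K, (‖uu k‖₊ : ℝ≥0∞) ^ 2) ^ (1/2 : ℝ) := by
    rw [ENNReal.mul_rpow_of_nonneg _ _ (by norm_num)]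
    congr 1
    rw [← ENNReal.rpow_natCast (ENNReal.ofReal γ) 2, ← ENNReal.rpow_mul]
    norm_num
  rw [hmul]
  exact ENNReal.rpow_le_rpow hsum_le (by norm_num)

end
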